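/- Let (v_ε) be an S-moderate net of Schwartz functions on ℝ^d and let Γ ⊆ ℝ^d \ {0} be a cone (tΓ ⊆ Γ for all t > 0). Then the following are equivalent: (1) for every moderate fast scale net (ξ_ε) with ξ_ε ∈ Γ for all ε, the net (\hat v_ε(ξ_ε)) is negligible; (2) for each integer m ≥ 1, sup over {ξ ∈ Γ : |ξ| ≥ ε^{−1/m}} of |\hat v_ε(ξ)| ≤ ε^m for small ε; (3) there exists N ∈ ℕ such that for each integer m ≥ 1, sup over ξ ∈ Γ of ⟨ξ⟩^m |\hat v_ε(ξ)| ≤ ε^{−N} for small ε. -/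

import Mathlib

open MeasureTheory Set Metric
open scoped RealInnerProductSpace

noncomputable section

/-- Euclidean space `ℝ^d`. -/
abbrev Eu (d : ℕ) : Type := EuclideanSpace ℝ (Fin d)

/-- A property of `ε` holds "for small ε", i.e. on some interval `(0, ε₀]`. -/
def SmallE (P : ℝ → Prop) : Prop :=
  ∃ ε₀ : ℝ, 0 < ε₀ ∧ ∀ ε : ℝ, 0 < ε → ε ≤ ε₀ → P ε

/-- A net in a normed space is moderate. -/
def ModNet {V : Type*} [NormedAddCommGroup V] (x : ℝ → V) : Prop :=
  ∃ N : ℕ, SmallE fun ε => ‖x ε‖ ≤ ε ^ (-(N : ℝ))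

/-- A net in a normed space is negligible. -/
def NegNet {V : Type*} [NormedAddCommGroup V] (x : ℝ → V) : Prop :=
  ∀ m : ℕ, SmallE fun ε => ‖x ε‖ ≤ ε ^ (m : ℝ)

/-- A fast scale infinitesimal net. -/
def FastInf {V : Type*} [NormedAddCommGroup V] (x : ℝ → V) : Prop :=
  ∃ a : ℝ, 0 < a ∧ SmallE fun ε => ‖x ε‖ ≤ ε ^ a

/-- A slow scale infinitesimal net of positive reals. -/
def SlowInfPos (r : ℝ → ℝ) : Prop :=
  (∀ ε : ℝ, 0 < ε → ε ≤ 1 → 0 < r ε) ∧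
    ∀ a : ℝ, 0 < a → SmallE fun ε => ε ^ a ≤ r ε ∧ r ε ≤ a

/-- A fast scale net. -/
def FastScale {V : Type*} [NormedAddCommGroup V] (x : ℝ → V) : Prop :=
  ∃ a : ℝ, 0 < a ∧ SmallE fun ε => ε ^ (-a) ≤ ‖x ε‖

/-- A slow scale net. -/
def SlowScale {V : Type*} [NormedAddCommGroup V] (x : ℝ → V) : Prop :=
  ∀ a : ℝ, 0 < a → SmallE fun ε => ‖x ε‖ ≤ ε ^ (-a)

/-- A slow scale net of positive reals. -/
def SlowScalePos (R : ℝ → ℝ) : Prop :=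
  (∀ ε : ℝ, 0 < ε → ε ≤ 1 → 0 < R ε) ∧
    ∀ a : ℝ, 0 < a → SmallE fun ε => R ε ≤ ε ^ (-a)

/-- First order partial derivative in the `i`-th coordinate direction. -/
def pd {d : ℕ} {F : Type*} [NormedAddCommGroup F] [NormedSpace ℝ F]
    (i : Fin d) (f : Eu d → F) : Eu d → F :=
  fun x => fderiv ℝ f x (EuclideanSpace.single i 1)

/-- Iterated partial derivative `∂^α` along a list of coordinate directions
(a multi-index `α`). -/
def pdL {d : ℕ} {F : Type*} [NormedAddCommGroup F] [NormedSpace ℝ F]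
    (L : List (Fin d)) (f : Eu d → F) : Eu d → F :=
  L.foldr pd f

/-- A moderate net of smooth functions on an open set `Ω`. -/
def SmoothModNetOn {d : ℕ} (Ω : Set (Eu d)) (u : ℝ → Eu d → ℂ) : Prop :=
  (∀ ε : ℝ, 0 < ε → ε ≤ 1 → ContDiffOn ℝ (⊤ : ℕ∞) (u ε) Ω) ∧
    ∀ K : Set (Eu d), IsCompact K → K ⊆ Ω → ∀ L : List (Fin d), ∃ N : ℕ,
      SmallE fun ε => ∀ x ∈ K, ‖pdL L (u ε) x‖ ≤ ε ^ (-(N : ℝ))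

/-- A moderate net of smooth functions with supports all contained in one
common compact subset of `Ω`. -/
def CptModNet {d : ℕ} (Ω : Set (Eu d)) (v : ℝ → Eu d → ℂ) : Prop :=
  (∀ ε : ℝ, 0 < ε → ε ≤ 1 → ContDiff ℝ (⊤ : ℕ∞) (v ε)) ∧
  (∃ K : Set (Eu d), IsCompact K ∧ K ⊆ Ω ∧
    ∀ ε : ℝ, 0 < ε → ε ≤ 1 → tsupport (v ε) ⊆ K) ∧
  (∀ L : List (Fin d), ∃ N : ℕ, SmallE fun ε =>
    ∀ x : Eu d, ‖pdL L (v ε) x‖ ≤ ε ^ (-(N : ℝ)))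

/-- The Fourier transform `∫ e^{-i x·ξ} w(x) dx`. -/
def FT {d : ℕ} (w : Eu d → ℂ) (ξ : Eu d) : ℂ :=
  ∫ x : Eu d, Complex.exp (-(Complex.I * ((⟪x, ξ⟫ : ℝ) : ℂ))) * w x

/-- The net `(u_ε)` is microlocally regular at the generalized point `(x₀, ξ₀)`. -/
def MicroReg {d : ℕ} (Ω : Set (Eu d)) (u : ℝ → Eu d → ℂ) (x₀ ξ₀ : ℝ → Eu d) : Prop :=
  ∃ v : ℝ → Eu d → ℂ, CptModNet Ω v ∧
    (∀ m : ℕ, 1 ≤ m → SmallE fun ε => ∀ x : Eu d,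
      ‖x - x₀ ε‖ ≤ ε ^ (1 / (m : ℝ)) → ‖u ε x - v ε x‖ ≤ ε ^ (m : ℝ)) ∧
    (∀ m : ℕ, 1 ≤ m → SmallE fun ε => ∀ ξ : Eu d,
      ε ^ (-(1 / (m : ℝ))) ≤ ‖ξ‖ → ‖‖ξ‖⁻¹ • ξ - ξ₀ ε‖ ≤ ε ^ (1 / (m : ℝ)) →
        ‖FT (v ε) ξ‖ ≤ ε ^ (m : ℝ))

/-- The "japanese bracket" `⟨ξ⟩ = (1+|ξ|²)^{1/2}`. -/
def jap {d : ℕ} (ξ : Eu d) : ℝ := Real.sqrt (1 + ‖ξ‖ ^ 2)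

/-- An S-moderate net of Schwartz functions. -/
def SModNet {d : ℕ} (v : ℝ → SchwartzMap (Eu d) ℂ) : Prop :=
  ∀ (L : List (Fin d)) (β : Fin d → ℕ), ∃ N : ℕ, SmallE fun ε =>
    ∀ x : Eu d, |∏ j, (x j) ^ (β j)| * ‖pdL L (⇑(v ε)) x‖ ≤ ε ^ (-(N : ℝ))

-- ####################  AUX  ####################
open scoped FourierTransform

namespace Stmt13Aux

lemma smallE_and {P Q : ℝ → Prop} (hP : SmallE P) (hQ : SmallE Q) :
    SmallE fun ε => P ε ∧ Q ε := by
  obtain ⟨a, ha, hA⟩ := hP; obtain ⟨b, hb, hB⟩ := hQ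
  exact ⟨min a b, lt_min ha hb, fun ε hε hle =>
    ⟨hA ε hε (hle.trans (min_le_left _ _)), hB ε hε (hle.trans (min_le_right _ _))⟩⟩

lemma smallE_mono {P Q : ℝ → Prop} (h : SmallE P)
    (imp : ∀ ε, 0 < ε → ε ≤ 1 → P ε → Q ε) : SmallE Q := by
  obtain ⟨a, ha, hA⟩ := h
  exact ⟨min a 1, lt_min ha one_pos, fun ε hε hle =>
    imp ε hε (hle.trans (min_le_right _ _)) (hA ε hε (hle.trans (min_le_left _ _)))⟩

lemma smallE_le (c : ℝ) (hc : 0 < c) : SmallE fun ε => ε ≤ c := ⟨c, hc, fun _ _ h => h⟩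

lemma rpow_neg_le {ε : ℝ} (hε : 0 < ε) (hε1 : ε ≤ 1) {N M : ℕ} (h : N ≤ M) :
    ε ^ (-(N : ℝ)) ≤ ε ^ (-(M : ℝ)) :=
  Real.rpow_le_rpow_of_exponent_ge hε hε1 (by exact neg_le_neg (by exact_mod_cast h))

lemma one_le_rpow_neg {ε : ℝ} (hε : 0 < ε) (hε1 : ε ≤ 1) (N : ℕ) : 1 ≤ ε ^ (-(N : ℝ)) := by
  simpa using rpow_neg_le hε hε1 (Nat.zero_le N)

lemma rpow_neg_add {ε : ℝ} (hε : 0 < ε) (N M : ℕ) :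
    ε ^ (-((N + M : ℕ) : ℝ)) = ε ^ (-(N : ℝ)) * ε ^ (-(M : ℝ)) := by
  rw [← Real.rpow_add hε]; push_cast; ring_nf

def ModU {α : Type*} (F : ℝ → α → ℝ) : Prop :=
  ∃ N : ℕ, SmallE fun ε => ∀ x, F ε x ≤ ε ^ (-(N : ℝ))

lemma ModU.mono {α} {F G : ℝ → α → ℝ} (h : ModU F)
    (hle : ∀ ε x, 0 < ε → ε ≤ 1 → G ε x ≤ F ε x) : ModU G := by
  obtain ⟨N, hN⟩ := h
  exact ⟨N, smallE_mono hN fun ε hε hε1 hP x => (hle ε x hε hε1).trans (hP x)⟩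

lemma ModU.add {α} {F G : ℝ → α → ℝ} (hF : ModU F) (hG : ModU G) :
    ModU fun ε x => F ε x + G ε x := by
  obtain ⟨N, hN⟩ := hF; obtain ⟨M, hM⟩ := hG
  refine ⟨max N M + 1, smallE_mono (smallE_and (smallE_and hN hM) (smallE_le (1/2) (by norm_num)))
    fun ε hε hε1 ⟨⟨h1, h2⟩, h3⟩ x => ?_⟩
  have e1 : F ε x ≤ ε ^ (-((max N M : ℕ) : ℝ)) := (h1 x).trans (rpow_neg_le hε hε1 (le_max_left _ _))
  have e2 : G ε x ≤ ε ^ (-((max N M : ℕ) : ℝ)) := (h2 x).trans (rpow_neg_le hε hε1 (le_max_right _ _))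
  have h4 : (2 : ℝ) ≤ ε⁻¹ := by
    have := inv_anti₀ hε h3
    simpa using this
  have h5 : ε ^ (-((max N M + 1 : ℕ) : ℝ)) = ε ^ (-((max N M : ℕ) : ℝ)) * ε⁻¹ := by
    rw [← Real.rpow_neg_one ε, ← Real.rpow_add hε]; push_cast; ring_nf
  have h6 : (0:ℝ) ≤ ε ^ (-((max N M : ℕ) : ℝ)) := (Real.rpow_pos_of_pos hε _).le
  calc F ε x + G ε x ≤ ε ^ (-((max N M : ℕ) : ℝ)) * 2 := by linarith
    _ ≤ ε ^ (-((max N M : ℕ) : ℝ)) * ε⁻¹ := by exact mul_le_mul_of_nonneg_left h4 h6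
    _ = ε ^ (-((max N M + 1 : ℕ) : ℝ)) := h5.symm

lemma ModU.zero {α} : ModU (fun (_ : ℝ) (_ : α) => (0:ℝ)) :=
  ⟨0, 1, one_pos, fun ε hε _ x => by simp [Real.rpow_zero]⟩

lemma ModU.sum {α ι : Type*} (s : Finset ι) (F : ι → ℝ → α → ℝ)
    (h : ∀ i ∈ s, ModU (F i)) : ModU fun ε x => ∑ i ∈ s, F i ε x := by
  classical
  induction s using Finset.induction with
  | empty => simpa using ModU.zero
  | @insert a s hni ih =>
    have := (h a (Finset.mem_insert_self a s)).add
      (ih fun i hi => h i (Finset.mem_insert_of_mem hi))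
    simpa [Finset.sum_insert hni] using this

lemma ModU.const_mul {α} {F : ℝ → α → ℝ} (h : ModU F)
    (hF : ∀ ε x, 0 < ε → ε ≤ 1 → 0 ≤ F ε x) (C : ℝ) :
    ModU fun ε x => C * F ε x := by
  rcases le_total C 0 with hC | hC
  · exact ⟨0, 1, one_pos, fun ε hε hε1 x => by
      have := mul_nonpos_of_nonpos_of_nonneg hC (hF ε x hε hε1)
      simpa [Real.rpow_zero] using this.trans zero_le_one⟩
  obtain ⟨N, hN⟩ := h
  refine ⟨N + 1, smallE_mono (smallE_and hN (smallE_le (C+1)⁻¹ (by positivity)))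
    fun ε hε hε1 ⟨h1, h2⟩ x => ?_⟩
  have h3 : C ≤ ε⁻¹ := by
    have := inv_anti₀ hε h2
    rw [inv_inv] at this; linarith
  have h4 : C * F ε x ≤ ε⁻¹ * ε ^ (-(N:ℝ)) :=
    mul_le_mul h3 (h1 x) (hF ε x hε hε1) (by positivity)
  refine h4.trans (le_of_eq ?_)
  rw [← Real.rpow_neg_one ε, ← Real.rpow_add hε]; push_cast; ring_nf

lemma one_add_pow_le {a : ℝ} (ha : 0 ≤ a) (k : ℕ) : (1+a)^k ≤ 2^k * (1 + a^k) := by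
  rcases le_total a 1 with h | h
  · calc (1+a)^k ≤ 2^k := pow_le_pow_left₀ (by linarith) (by linarith) k
      _ ≤ 2^k * (1 + a^k) := le_mul_of_one_le_right (by positivity)
          (by have := pow_nonneg ha k; linarith)
  · calc (1+a)^k ≤ (2*a)^k := pow_le_pow_left₀ (by linarith) (by linarith) k
      _ = 2^k * a^k := mul_pow 2 a k
      _ ≤ 2^k * (1 + a^k) := by
          have : (0:ℝ) ≤ (2:ℝ)^k := by positivity
          nlinarith

lemma norm_le_sum {d : ℕ} (ξ : Eu d) : ‖ξ‖ ≤ ∑ i, |ξ i| := by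
  rw [EuclideanSpace.norm_eq]
  have h1 : ∑ i, ‖ξ i‖^2 ≤ (∑ i, |ξ i|)^2 := by
    simp only [Real.norm_eq_abs]
    calc ∑ i, |ξ i|^2 ≤ ∑ i, |ξ i| * ∑ j, |ξ j| := by
          refine Finset.sum_le_sum fun i _ => ?_
          rw [sq]
          exact mul_le_mul_of_nonneg_left
            (Finset.single_le_sum (fun j _ => abs_nonneg (ξ j)) (Finset.mem_univ i))
            (abs_nonneg _)
      _ = (∑ i, |ξ i|)^2 := by rw [← Finset.sum_mul, sq]
  refine (Real.sqrt_le_sqrt h1).trans_eq (Real.sqrt_sq ?_)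
  exact Finset.sum_nonneg fun i _ => abs_nonneg _

lemma norm_sq_eq {d : ℕ} (x : Eu d) : ‖x‖^2 = ∑ j, (x j)^2 := by
  rw [EuclideanSpace.norm_eq, Real.sq_sqrt (by positivity)]
  simp [Real.norm_eq_abs, sq_abs]

lemma one_le_jap {d : ℕ} (ξ : Eu d) : 1 ≤ jap ξ := by
  have h := Real.sqrt_le_sqrt (show (1:ℝ) ≤ 1 + ‖ξ‖^2 by nlinarith [sq_nonneg ‖ξ‖])
  rwa [Real.sqrt_one] at h

lemma jap_nonneg {d : ℕ} (ξ : Eu d) : 0 ≤ jap ξ := zero_le_one.trans (one_le_jap ξ)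

lemma norm_le_jap {d : ℕ} (ξ : Eu d) : ‖ξ‖ ≤ jap ξ := by
  have h := Real.sqrt_le_sqrt (show ‖ξ‖^2 ≤ 1 + ‖ξ‖^2 by linarith)
  rwa [Real.sqrt_sq (norm_nonneg ξ)] at h

lemma jap_le {d : ℕ} (ξ : Eu d) : jap ξ ≤ 1 + ‖ξ‖ := by
  have h := Real.sqrt_le_sqrt (show 1 + ‖ξ‖^2 ≤ (1+‖ξ‖)^2 by nlinarith [norm_nonneg ξ])
  rwa [Real.sqrt_sq (by positivity)] at h

lemma jap_sq {d : ℕ} (ξ : Eu d) : jap ξ^2 = 1 + ‖ξ‖^2 := Real.sq_sqrt (by positivity)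

end Stmt13Aux

section FTpart
open Complex SchwartzMap
namespace Stmt13Aux

variable {d : ℕ}

def pdLS (L : List (Fin d)) (f : SchwartzMap (Eu d) ℂ) : SchwartzMap (Eu d) ℂ :=
  L.foldr (fun i g => LineDeriv.lineDerivOpCLM ℝ (SchwartzMap (Eu d) ℂ) (EuclideanSpace.single i (1:ℝ) : Eu d) g) f

lemma pdLS_coe (L : List (Fin d)) (f : SchwartzMap (Eu d) ℂ) :
    ⇑(pdLS L f) = pdL L ⇑f := by
  induction L with
  | nil => rfl
  | cons i L ih =>
    funext x
    show LineDeriv.lineDerivOpCLM ℝ (SchwartzMap (Eu d) ℂ) (EuclideanSpace.single i (1:ℝ) : Eu d) (pdLS L f) x = pd i (pdL L ⇑f) x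
    rw [LineDeriv.lineDerivOpCLM_apply, SchwartzMap.lineDerivOp_apply_eq_fderiv, ← ih]
    rfl

lemma norm_FT_le (w : Eu d → ℂ) (ξ : Eu d) : ‖FT w ξ‖ ≤ ∫ x : Eu d, ‖w x‖ := by
  refine (norm_integral_le_integral_norm _).trans_eq ?_
  congr 1; funext x
  rw [norm_mul]
  have h : ‖Complex.exp (-(Complex.I * ((⟪x, ξ⟫ : ℝ) : ℂ)))‖ = 1 := by
    rw [Complex.norm_exp]
    simp
  rw [h, one_mul]

lemma FT_eq_fourier (w : Eu d → ℂ) (ξ : Eu d) :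
    FT w ξ = 𝓕 w ((2 * Real.pi)⁻¹ • ξ) := by
  rw [Real.fourier_eq']
  unfold FT
  congr 1; funext v
  rw [smul_eq_mul]
  congr 1
  rw [real_inner_smul_right]
  have hπ : (2 * Real.pi) ≠ 0 := by
    have := Real.pi_pos; positivity
  have h : -2 * Real.pi * ((2 * Real.pi)⁻¹ * (⟪v, ξ⟫ : ℝ)) = -(⟪v, ξ⟫ : ℝ) := by
    field_simp
  rw [h]
  push_cast
  ring

lemma FT_pd (f : SchwartzMap (Eu d) ℂ) (i : Fin d) (ξ : Eu d) :
    FT (⇑(LineDeriv.lineDerivOpCLM ℝ (SchwartzMap (Eu d) ℂ) (EuclideanSpace.single i (1:ℝ) : Eu d) f)) ξ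
      = (Complex.I * ((ξ i : ℝ) : ℂ)) * FT (⇑f) ξ := by
  have hfd : fderiv ℝ ⇑f = ⇑(SchwartzMap.fderivCLM ℝ (Eu d) ℂ f) := by
    funext x; exact (SchwartzMap.fderivCLM_apply ℝ f x).symm
  have hf' : Integrable (fderiv ℝ ⇑f) := by
    rw [hfd]; exact SchwartzMap.integrable _
  have key := Real.fourier_fderiv f.integrable f.differentiable hf'
  rw [FT_eq_fourier, FT_eq_fourier]
  have h1 : ⇑(LineDeriv.lineDerivOpCLM ℝ (SchwartzMap (Eu d) ℂ) (EuclideanSpace.single i (1:ℝ) : Eu d) f)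
      = fun x => fderiv ℝ (⇑f) x (EuclideanSpace.single i 1) := by
    funext x; exact SchwartzMap.lineDerivOp_apply_eq_fderiv _ f x
  rw [h1, ← Real.fourier_continuousLinearMap_apply hf', key]
  rw [VectorFourier.fourierSMulRight_apply]
  have h2 : ((-(innerSL ℝ)) ((2*Real.pi)⁻¹ • ξ)) (EuclideanSpace.single i (1:ℝ))
      = -((2*Real.pi)⁻¹ * ξ i) := by
    simp only [ContinuousLinearMap.neg_apply, innerSL_apply_apply]
    rw [EuclideanSpace.inner_single_right]
    simp [PiLp.smul_apply, smul_eq_mul, mul_comm]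
  rw [h2]
  have hπ : (2 * Real.pi) ≠ 0 := by
    have := Real.pi_pos; positivity
  rw [smul_eq_mul, Complex.real_smul]
  push_cast
  have hπc : (Real.pi : ℂ) ≠ 0 := Complex.ofReal_ne_zero.mpr Real.pi_ne_zero
  field_simp

lemma norm_FT_pd (f : SchwartzMap (Eu d) ℂ) (i : Fin d) (ξ : Eu d) :
    ‖FT (⇑(LineDeriv.lineDerivOpCLM ℝ (SchwartzMap (Eu d) ℂ) (EuclideanSpace.single i (1:ℝ) : Eu d) f)) ξ‖
      = |ξ i| * ‖FT (⇑f) ξ‖ := by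
  rw [FT_pd, norm_mul, norm_mul, Complex.norm_I, one_mul, Complex.norm_real, Real.norm_eq_abs]

end Stmt13Aux
end FTpart

section ESTpart
namespace Stmt13Aux
open MeasureTheory Finset

variable {d : ℕ} {v : ℝ → SchwartzMap (Eu d) ℂ}

/-- weighted pointwise bound: `(1+‖x‖)^(2(d+1)) ‖∂^L v_ε(x)‖` is a moderate net. -/
lemma weight_bound (hv : SModNet v) (L : List (Fin d)) :
    ModU fun ε (x : Eu d) => (1 + ‖x‖) ^ (2*(d+1)) * ‖pdLS L (v ε) x‖ := by
  classical
  -- component ModU's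
  have h0 : ModU fun ε (x : Eu d) => ‖pdLS L (v ε) x‖ := by
    obtain ⟨N, hN⟩ := hv L (fun _ => 0)
    refine ⟨N, smallE_mono hN fun ε hε hε1 h x => ?_⟩
    have := h x
    simpa [pdLS_coe] using this
  have hj : ∀ j : Fin d, ModU fun ε (x : Eu d) => (x j) ^ (2*(d+1)) * ‖pdLS L (v ε) x‖ := by
    intro j
    obtain ⟨N, hN⟩ := hv L (fun j' => if j' = j then 2*(d+1) else 0)
    refine ⟨N, smallE_mono hN fun ε hε hε1 h x => ?_⟩
    have hx := h x
    have hprod : ∏ j', (x j') ^ (if j' = j then 2*(d+1) else 0) = (x j) ^ (2*(d+1)) := by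
      rw [Finset.prod_eq_single_of_mem j (Finset.mem_univ j)]
      · simp
      · intro b _ hb; simp [hb]
    rw [hprod] at hx
    have habs : (x j) ^ (2*(d+1)) ≤ |(x j) ^ (2*(d+1))| := le_abs_self _
    calc (x j) ^ (2*(d+1)) * ‖pdLS L (v ε) x‖
        ≤ |(x j) ^ (2*(d+1))| * ‖pdLS L (v ε) x‖ :=
          mul_le_mul_of_nonneg_right habs (norm_nonneg _)
      _ ≤ ε ^ (-(N:ℝ)) := by simpa [pdLS_coe] using hx
  -- assemble
  set C : ℝ := 4^(d+1) * ((d:ℝ)^d + 1) with hC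
  have hC0 : 0 ≤ C := by positivity
  have hsum : ModU fun ε (x : Eu d) =>
      C * (‖pdLS L (v ε) x‖ + ∑ j : Fin d, (x j) ^ (2*(d+1)) * ‖pdLS L (v ε) x‖) :=
    (h0.add (ModU.sum Finset.univ _ fun j _ => hj j)).const_mul
      (fun ε x hε hε1 => by
        have h1 : (0:ℝ) ≤ ∑ j : Fin d, (x j) ^ (2*(d+1)) * ‖pdLS L (v ε) x‖ :=
          Finset.sum_nonneg fun j _ => mul_nonneg (Even.pow_nonneg (even_two_mul _) _) (norm_nonneg _)
        have := norm_nonneg (pdLS L (v ε) x); linarith) C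
  refine hsum.mono fun ε x hε hε1 => ?_
  set n : ℝ := ‖pdLS L (v ε) x‖ with hn
  have hn0 : 0 ≤ n := norm_nonneg _
  -- key pointwise inequality
  have key : (1 + ‖x‖) ^ (2*(d+1)) ≤ C * (1 + ∑ j : Fin d, (x j) ^ (2*(d+1))) := by
    have e1 : (1 + ‖x‖) ^ (2*(d+1)) = ((1+‖x‖)^2)^(d+1) := by rw [← pow_mul]
    have e2 : ((1+‖x‖)^2)^(d+1) ≤ (2*(1+‖x‖^2))^(d+1) := by
      apply pow_le_pow_left₀ (by positivity)
      nlinarith [norm_nonneg x, sq_nonneg (1 - ‖x‖)]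
    have e3 : (2*(1+‖x‖^2))^(d+1) = 2^(d+1) * (1+‖x‖^2)^(d+1) := mul_pow _ _ _
    have e4 : (1+‖x‖^2)^(d+1) ≤ 2^(d+1) * (1 + (‖x‖^2)^(d+1)) :=
      one_add_pow_le (by positivity) (d+1)
    have e5 : (‖x‖^2)^(d+1) ≤ (d:ℝ)^d * ∑ j : Fin d, (x j) ^ (2*(d+1)) := by
      rw [norm_sq_eq]
      have := pow_sum_le_card_mul_sum_pow
        (s := (Finset.univ : Finset (Fin d))) (f := fun j => (x j)^2)
        (fun j _ => sq_nonneg (x j)) d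
      simp only [Finset.card_univ, Fintype.card_fin] at this
      calc (∑ j : Fin d, (x j)^2)^(d+1) ≤ (d:ℝ)^d * ∑ j : Fin d, ((x j)^2)^(d+1) := this
        _ = (d:ℝ)^d * ∑ j : Fin d, (x j) ^ (2*(d+1)) := by
            congr 1; exact Finset.sum_congr rfl fun j _ => by rw [← pow_mul]
    have hd0 : (0:ℝ) ≤ (d:ℝ)^d := by positivity
    have hs0 : (0:ℝ) ≤ ∑ j : Fin d, (x j) ^ (2*(d+1)) :=
      Finset.sum_nonneg fun j _ => Even.pow_nonneg (even_two_mul _) _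
    calc (1 + ‖x‖) ^ (2*(d+1)) = ((1+‖x‖)^2)^(d+1) := e1
      _ ≤ 2^(d+1) * (1+‖x‖^2)^(d+1) := by rw [← e3]; exact e2
      _ ≤ 2^(d+1) * (2^(d+1) * (1 + (‖x‖^2)^(d+1))) :=
          mul_le_mul_of_nonneg_left e4 (by positivity)
      _ = 4^(d+1) * (1 + (‖x‖^2)^(d+1)) := by
          rw [show ((4:ℝ))^(d+1) = 2^(d+1) * 2^(d+1) by rw [← mul_pow]; norm_num]
          ring
      _ ≤ 4^(d+1) * (1 + (d:ℝ)^d * ∑ j : Fin d, (x j) ^ (2*(d+1))) := by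
          have : (0:ℝ) ≤ (4:ℝ)^(d+1) := by positivity
          nlinarith
      _ ≤ C * (1 + ∑ j : Fin d, (x j) ^ (2*(d+1))) := by
          rw [hC]
          have h40 : (0:ℝ) ≤ (4:ℝ)^(d+1) := by positivity
          nlinarith
  calc (1 + ‖x‖) ^ (2*(d+1)) * n
      ≤ (C * (1 + ∑ j : Fin d, (x j) ^ (2*(d+1)))) * n :=
        mul_le_mul_of_nonneg_right key hn0
    _ = C * (n + (∑ j : Fin d, (x j) ^ (2*(d+1))) * n) := by ring
    _ = C * (n + ∑ j : Fin d, (x j) ^ (2*(d+1)) * n) := by rw [Finset.sum_mul]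

/-- L¹ moderate bound. -/
lemma l1_bound (hv : SModNet v) (L : List (Fin d)) :
    ∃ N : ℕ, SmallE fun ε => (∫ x : Eu d, ‖pdLS L (v ε) x‖) ≤ ε ^ (-(N:ℝ)) := by
  obtain ⟨N, hN⟩ := weight_bound hv L
  set M : ℕ := 2*(d+1) with hM
  have hint : Integrable (fun x : Eu d => (1+‖x‖) ^ (-(M:ℝ))) := by
    apply integrable_one_add_norm
    rw [finrank_euclideanSpace_fin]
    push_cast [hM]; linarith
  set I0 : ℝ := ∫ x : Eu d, (1+‖x‖) ^ (-(M:ℝ)) with hI0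
  have hI00 : 0 ≤ I0 := integral_nonneg fun x => Real.rpow_nonneg (by positivity) _
  refine ⟨N+1, smallE_mono (smallE_and hN (smallE_le (I0+1)⁻¹ (by positivity)))
    fun ε hε hε1 ⟨h1, h2⟩ => ?_⟩
  have hpt : ∀ x : Eu d, ‖pdLS L (v ε) x‖ ≤ ε ^ (-(N:ℝ)) * (1+‖x‖) ^ (-(M:ℝ)) := by
    intro x
    have hb : (0:ℝ) < (1+‖x‖)^M := by positivity
    have hx := h1 x
    have hrw : (1+‖x‖) ^ (-(M:ℝ)) = ((1+‖x‖)^M)⁻¹ := by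
      rw [Real.rpow_neg (by positivity), Real.rpow_natCast]
    rw [hrw, mul_comm (ε ^ (-(N:ℝ))), ← div_eq_inv_mul, le_div_iff₀ hb, mul_comm]
    exact hx
  have hmono : (∫ x : Eu d, ‖pdLS L (v ε) x‖)
      ≤ ∫ x : Eu d, ε ^ (-(N:ℝ)) * (1+‖x‖) ^ (-(M:ℝ)) := by
    refine integral_mono ((pdLS L (v ε)).integrable.norm) (hint.const_mul _) hpt
  rw [integral_const_mul] at hmono
  have h3 : I0 ≤ ε⁻¹ := by
    have := inv_anti₀ hε h2
    rw [inv_inv] at this; linarith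
  calc (∫ x : Eu d, ‖pdLS L (v ε) x‖) ≤ ε ^ (-(N:ℝ)) * I0 := hmono
    _ ≤ ε ^ (-(N:ℝ)) * ε⁻¹ := mul_le_mul_of_nonneg_left h3 (by positivity)
    _ = ε ^ (-((N+1:ℕ):ℝ)) := by
        rw [← Real.rpow_neg_one ε, ← Real.rpow_add hε]; push_cast; ring_nf

/-- main decay estimate: `‖ξ‖^k ‖FT(∂^L v_ε)(ξ)‖` is moderate, uniformly in `ξ`. -/
lemma decay (hv : SModNet v) :
    ∀ (k : ℕ) (L : List (Fin d)),
      ModU fun ε (ξ : Eu d) => ‖ξ‖^k * ‖FT (⇑(pdLS L (v ε))) ξ‖ := by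
  intro k
  induction k with
  | zero =>
    intro L
    obtain ⟨N, hN⟩ := l1_bound hv L
    refine ⟨N, smallE_mono hN fun ε hε hε1 h ξ => ?_⟩
    simpa using (norm_FT_le (⇑(pdLS L (v ε))) ξ).trans h
  | succ k ih =>
    intro L
    have hsum : ModU fun ε (ξ : Eu d) =>
        ∑ i : Fin d, ‖ξ‖^k * ‖FT (⇑(pdLS (i::L) (v ε))) ξ‖ :=
      ModU.sum Finset.univ _ fun i _ => ih (i::L)
    refine hsum.mono fun ε ξ hε hε1 => ?_
    have hle : ‖ξ‖ * ‖FT (⇑(pdLS L (v ε))) ξ‖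
        ≤ ∑ i : Fin d, |ξ i| * ‖FT (⇑(pdLS L (v ε))) ξ‖ := by
      rw [← Finset.sum_mul]
      exact mul_le_mul_of_nonneg_right (norm_le_sum ξ) (norm_nonneg _)
    calc ‖ξ‖^(k+1) * ‖FT (⇑(pdLS L (v ε))) ξ‖
        = (‖ξ‖ * ‖FT (⇑(pdLS L (v ε))) ξ‖) * ‖ξ‖^k := by ring
      _ ≤ (∑ i : Fin d, |ξ i| * ‖FT (⇑(pdLS L (v ε))) ξ‖) * ‖ξ‖^k :=
          mul_le_mul_of_nonneg_right hle (by positivity)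
      _ = ∑ i : Fin d, ‖ξ‖^k * ‖FT (⇑(pdLS (i::L) (v ε))) ξ‖ := by
          rw [Finset.sum_mul]
          refine Finset.sum_congr rfl fun i _ => ?_
          have : ‖FT (⇑(pdLS (i::L) (v ε))) ξ‖ = |ξ i| * ‖FT (⇑(pdLS L (v ε))) ξ‖ :=
            norm_FT_pd (pdLS L (v ε)) i ξ
          rw [this]; ring

/-- jap-bracket decay. -/
lemma jap_decay (hv : SModNet v) (m : ℕ) :
    ModU fun ε (ξ : Eu d) => jap ξ ^ m * ‖FT (⇑(v ε)) ξ‖ := by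
  have h0 := decay hv 0 []
  have hm := decay hv m []
  have hsum := (h0.add hm).const_mul
    (fun ε ξ hε hε1 => by positivity) (2^m)
  refine hsum.mono fun ε ξ hε hε1 => ?_
  have hj : jap ξ ^ m ≤ 2^m * (1 + ‖ξ‖^m) :=
    (pow_le_pow_left₀ (jap_nonneg ξ) (jap_le ξ) m).trans (one_add_pow_le (norm_nonneg ξ) m)
  have hFT : ⇑(pdLS [] (v ε)) = ⇑(v ε) := rfl
  calc jap ξ ^ m * ‖FT (⇑(v ε)) ξ‖
      ≤ (2^m * (1 + ‖ξ‖^m)) * ‖FT (⇑(v ε)) ξ‖ :=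
        mul_le_mul_of_nonneg_right hj (norm_nonneg _)
    _ = 2^m * (‖ξ‖^0 * ‖FT (⇑(pdLS [] (v ε))) ξ‖ + ‖ξ‖^m * ‖FT (⇑(pdLS [] (v ε))) ξ‖) := by
        rw [hFT]; ring

end Stmt13Aux
end ESTpart


open Stmt13Aux in
/-- Lemma 5.1: characterizations of the vanishing of the Fourier
transform of an S-moderate net of Schwartz functions on a nongeneralized cone. -/
theorem stmt13 {d : ℕ} (v : ℝ → SchwartzMap (Eu d) ℂ) (hv : SModNet v)
    (Γ : Set (Eu d)) (hΓ0 : (0 : Eu d) ∉ Γ)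
    (hΓ : ∀ t : ℝ, 0 < t → ∀ ξ ∈ Γ, t • ξ ∈ Γ) :
    [ -- (1) vanishing at all moderate fast scale points of the cone
      (∀ ξ : ℝ → Eu d, ModNet ξ → FastScale ξ →
        (∀ ε : ℝ, 0 < ε → ε ≤ 1 → ξ ε ∈ Γ) →
        NegNet fun ε => FT (⇑(v ε)) (ξ ε)),
      -- (2) sup estimates on the truncated cone
      (∀ m : ℕ, 1 ≤ m → SmallE fun ε => ∀ ξ ∈ Γ,
        ε ^ (-(1 / (m : ℝ))) ≤ ‖ξ‖ → ‖FT (⇑(v ε)) ξ‖ ≤ ε ^ (m : ℝ)),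
      -- (3) rapid decrease estimates on the cone
      (∃ N : ℕ, ∀ m : ℕ, 1 ≤ m → SmallE fun ε => ∀ ξ ∈ Γ,
        jap ξ ^ m * ‖FT (⇑(v ε)) ξ‖ ≤ ε ^ (-(N : ℝ))) ].TFAE := by
  classical
  tfae_have 1 → 2 := by
    intro h1 m hm
    by_contra hcon
    rcases Set.eq_empty_or_nonempty Γ with hΓe | ⟨γ₀, hγ₀⟩
    · exact hcon ⟨1, one_pos, fun ε hε hε1 ξ hξ => absurd hξ (by simp [hΓe])⟩
    have hγ0 : γ₀ ≠ 0 := fun h => hΓ0 (h ▸ hγ₀)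
    have hγn : (0:ℝ) < ‖γ₀‖ := norm_pos_iff.mpr hγ0
    have hm0 : (0:ℝ) < (m:ℝ) := by exact_mod_cast Nat.lt_of_lt_of_le Nat.zero_lt_one hm
    obtain ⟨N₁, hN₁⟩ := decay hv 1 []
    set Bad : ℝ → Prop := fun ε => ∃ ζ, ζ ∈ Γ ∧ ε ^ (-(1/(m:ℝ))) ≤ ‖ζ‖ ∧
      ε ^ ((m:ℝ)) < ‖FT (⇑(v ε)) ζ‖ with hBadDef
    set ξn : ℝ → Eu d := fun ε =>
      if h : Bad ε then h.choose else (ε ^ (-(1/(m:ℝ))) * ‖γ₀‖⁻¹) • γ₀ with hξdef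
    have hgood : ∀ ε : ℝ, ¬ Bad ε → ξn ε = (ε ^ (-(1/(m:ℝ))) * ‖γ₀‖⁻¹) • γ₀ :=
      fun ε h => dif_neg h
    have hbadspec : ∀ ε : ℝ, Bad ε → ξn ε ∈ Γ ∧ ε ^ (-(1/(m:ℝ))) ≤ ‖ξn ε‖ ∧
        ε ^ ((m:ℝ)) < ‖FT (⇑(v ε)) (ξn ε)‖ := by
      intro ε h
      have he : ξn ε = h.choose := dif_pos h
      rw [he]
      exact h.choose_spec
    have hnorm_def : ∀ ε : ℝ, 0 < ε → ¬ Bad ε → ‖ξn ε‖ = ε ^ (-(1/(m:ℝ))) := by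
      intro ε hε h
      rw [hgood ε h, norm_smul, Real.norm_eq_abs, abs_of_pos (by positivity), mul_assoc,
        inv_mul_cancel₀ (ne_of_gt hγn), mul_one]
    have hmem : ∀ ε : ℝ, 0 < ε → ε ≤ 1 → ξn ε ∈ Γ := by
      intro ε hε hε1
      by_cases h : Bad ε
      · exact (hbadspec ε h).1
      · rw [hgood ε h]
        exact hΓ _ (by positivity) _ hγ₀
    have hfast : ∃ a : ℝ, 0 < a ∧ SmallE fun ε => ε ^ (-a) ≤ ‖ξn ε‖ := by
      refine ⟨1/(m:ℝ), by positivity, 1, one_pos, fun ε hε hε1 => ?_⟩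
      show ε ^ (-(1/(m:ℝ))) ≤ ‖ξn ε‖
      by_cases h : Bad ε
      · exact (hbadspec ε h).2.1
      · rw [hnorm_def ε hε h]
    have hmod : ∃ N : ℕ, SmallE fun ε => ‖ξn ε‖ ≤ ε ^ (-(N : ℝ)) := by
      refine ⟨N₁ + m, smallE_mono hN₁ fun ε hε hε1 hb => ?_⟩
      by_cases h : Bad ε
      · obtain ⟨-, -, hFT⟩ := hbadspec ε h
        have h2 : ‖ξn ε‖^1 * ‖FT (⇑(v ε)) (ξn ε)‖ ≤ ε ^ (-(N₁:ℝ)) := hb (ξn ε)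
        rw [pow_one] at h2
        have h3 : ‖ξn ε‖ * ε ^ ((m:ℝ)) ≤ ε ^ (-(N₁:ℝ)) :=
          le_trans (mul_le_mul_of_nonneg_left hFT.le (norm_nonneg _)) h2
        have h4 : (0:ℝ) < ε ^ ((m:ℝ)) := Real.rpow_pos_of_pos hε _
        rw [← le_div_iff₀ h4] at h3
        refine h3.trans (le_of_eq ?_)
        rw [← Real.rpow_sub hε]
        congr 1; push_cast; ring
      · rw [hnorm_def ε hε h]
        apply Real.rpow_le_rpow_of_exponent_ge hε hε1
        have h5 : 1/(m:ℝ) ≤ 1 := by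
          rw [div_le_one hm0]; exact_mod_cast hm
        have h6 : (1:ℝ) ≤ (m:ℝ) := by exact_mod_cast hm
        have h7 : (0:ℝ) ≤ (N₁:ℝ) := Nat.cast_nonneg _
        push_cast
        linarith
    have hneg := h1 ξn hmod hfast hmem (m+1)
    unfold SmallE at hcon
    push_neg at hcon
    obtain ⟨ε₀, hε₀, hsm⟩ := hneg
    obtain ⟨ε, hε, hεle, hbadP⟩ := hcon (min ε₀ 1) (by positivity)
    obtain ⟨ζ, hζ1, hζ2, hζ3⟩ := hbadP
    have hb : Bad ε := ⟨ζ, hζ1, hζ2, hζ3⟩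
    have h4 := hsm ε hε (hεle.trans (min_le_left _ _))
    have hε1 : ε ≤ 1 := hεle.trans (min_le_right _ _)
    have h5 : ε ^ (((m+1:ℕ)):ℝ) ≤ ε ^ ((m:ℝ)) :=
      Real.rpow_le_rpow_of_exponent_ge hε hε1 (by push_cast; linarith)
    exact absurd ((hbadspec ε hb).2.2.trans_le (h4.trans h5)) (lt_irrefl _)
  tfae_have 2 → 3 := by
    intro h2
    obtain ⟨N₀, hN₀⟩ := decay hv 0 []
    refine ⟨N₀ + 1, fun m hm => ?_⟩
    obtain ⟨N₂, hN₂⟩ := jap_decay hv (2*m)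
    set m' : ℕ := max (2*m) (N₂+1) with hm'def
    have hm'1 : 1 ≤ m' := le_trans (by omega) (le_max_left _ _)
    have hm'0 : (0:ℝ) < (m':ℝ) := by
      exact_mod_cast Nat.lt_of_lt_of_le Nat.zero_lt_one hm'1
    have h2' := h2 m' hm'1
    refine smallE_mono (smallE_and hN₀ (smallE_and hN₂ (smallE_and h2'
      (smallE_le ((4:ℝ)^m)⁻¹ (by positivity))))) ?_
    rintro ε hε hε1 ⟨hA, ⟨hB, hC, hD⟩⟩ ξ hξΓ
    have hFT0 : ‖FT (⇑(v ε)) ξ‖ ≤ ε ^ (-(N₀:ℝ)) := by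
      have := hA ξ
      simpa [pdLS] using this
    by_cases hcase : ε ^ (-(1/(m':ℝ))) ≤ ‖ξ‖
    · have hF := hC ξ hξΓ hcase
      have hBx : jap ξ ^ (2*m) * ‖FT (⇑(v ε)) ξ‖ ≤ ε ^ (-(N₂:ℝ)) := hB ξ
      have hsq : (jap ξ ^ m * ‖FT (⇑(v ε)) ξ‖)^2 ≤ ε ^ ((m':ℝ) - (N₂:ℝ)) := by
        have he : (jap ξ ^ m * ‖FT (⇑(v ε)) ξ‖)^2
            = (jap ξ ^ (2*m) * ‖FT (⇑(v ε)) ξ‖) * ‖FT (⇑(v ε)) ξ‖ := by ring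
        rw [he]
        calc (jap ξ ^ (2*m) * ‖FT (⇑(v ε)) ξ‖) * ‖FT (⇑(v ε)) ξ‖
            ≤ ε ^ (-(N₂:ℝ)) * ε ^ ((m':ℝ)) := by
              refine mul_le_mul hBx hF (norm_nonneg _) ?_
              positivity
          _ = ε ^ ((m':ℝ) - (N₂:ℝ)) := by
              rw [← Real.rpow_add hε]; ring_nf
      have h1le : (jap ξ ^ m * ‖FT (⇑(v ε)) ξ‖)^2 ≤ 1 := by
        refine hsq.trans (Real.rpow_le_one hε.le hε1 ?_)
        have hge : (N₂:ℝ) + 1 ≤ (m':ℝ) := by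
          have := le_max_right (2*m) (N₂+1)
          exact_mod_cast this
        linarith
      have hnn : 0 ≤ jap ξ ^ m * ‖FT (⇑(v ε)) ξ‖ :=
        mul_nonneg (pow_nonneg (jap_nonneg ξ) m) (norm_nonneg _)
      have hle1 : jap ξ ^ m * ‖FT (⇑(v ε)) ξ‖ ≤ 1 := by nlinarith
      exact hle1.trans (one_le_rpow_neg hε hε1 _)
    · push_neg at hcase
      have hj2 : jap ξ ^ 2 ≤ 2 * (ε ^ (-(1/(m':ℝ))))^2 := by
        rw [jap_sq]
        have h1 : ‖ξ‖^2 ≤ (ε ^ (-(1/(m':ℝ))))^2 :=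
          pow_le_pow_left₀ (norm_nonneg ξ) hcase.le 2
        have he1 : (1:ℝ) ≤ ε ^ (-(1/(m':ℝ))) :=
          Real.one_le_rpow_of_pos_of_le_one_of_nonpos hε hε1
            (neg_nonpos.mpr (by positivity))
        nlinarith
      have hjle : jap ξ ≤ Real.sqrt 2 * ε ^ (-(1/(m':ℝ))) := by
        have hb0 : (0:ℝ) ≤ Real.sqrt 2 * ε ^ (-(1/(m':ℝ))) := by positivity
        refine le_of_pow_le_pow_left₀ two_ne_zero hb0 ?_
        rw [mul_pow, Real.sq_sqrt (by norm_num : (0:ℝ) ≤ 2)]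
        exact hj2
      have hjm : jap ξ ^ m ≤ ε ^ (-(1:ℝ)) := by
        have step3 : (ε ^ (-(1/(m':ℝ))))^m = ε ^ (-((m:ℝ)/(m':ℝ))) := by
          rw [← Real.rpow_natCast (ε ^ (-(1/(m':ℝ)))) m, ← Real.rpow_mul hε.le]
          congr 1; field_simp
        have step4 : ε ^ (-((m:ℝ)/(m':ℝ))) ≤ ε ^ (-(1/2 : ℝ)) := by
          apply Real.rpow_le_rpow_of_exponent_ge hε hε1
          have h2m : ((2*m:ℕ):ℝ) ≤ (m':ℝ) := by
            exact_mod_cast le_max_left (2*m) (N₂+1)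
          have hdd : (m:ℝ)/(m':ℝ) ≤ 1/2 := by
            rw [div_le_div_iff₀ hm'0 (by norm_num : (0:ℝ) < 2)]
            push_cast at h2m ⊢
            linarith
          linarith
        have step5 : (Real.sqrt 2)^m ≤ ε ^ (-(1/2:ℝ)) := by
          have h4m : (4:ℝ)^m ≤ ε⁻¹ := by
            have := inv_anti₀ hε hD
            rwa [inv_inv] at this
          have e1 : ((Real.sqrt 2)^m)^2 = 2^m := by
            rw [← pow_mul, mul_comm m 2, pow_mul, Real.sq_sqrt (by norm_num : (0:ℝ) ≤ 2)]
          have e2 : (ε ^ (-(1/2:ℝ)))^2 = ε⁻¹ := by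
            rw [← Real.rpow_natCast (ε ^ (-(1/2:ℝ))) 2, ← Real.rpow_mul hε.le]
            norm_num
            exact (Real.rpow_neg_one ε)
          have hsq2 : ((Real.sqrt 2)^m)^2 ≤ (ε ^ (-(1/2:ℝ)))^2 := by
            rw [e1, e2]
            calc (2:ℝ)^m ≤ 4^m := pow_le_pow_left₀ (by norm_num) (by norm_num) m
              _ ≤ ε⁻¹ := h4m
          exact le_of_pow_le_pow_left₀ two_ne_zero (by positivity) hsq2
        calc jap ξ ^ m ≤ (Real.sqrt 2 * ε ^ (-(1/(m':ℝ))))^m :=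
              pow_le_pow_left₀ (jap_nonneg ξ) hjle m
          _ = (Real.sqrt 2)^m * (ε ^ (-(1/(m':ℝ))))^m := mul_pow _ _ _
          _ = (Real.sqrt 2)^m * ε ^ (-((m:ℝ)/(m':ℝ))) := by rw [step3]
          _ ≤ ε ^ (-(1/2:ℝ)) * ε ^ (-(1/2:ℝ)) :=
              mul_le_mul step5 step4 (by positivity) (by positivity)
          _ = ε ^ (-(1:ℝ)) := by
              rw [← Real.rpow_add hε]; norm_num
      calc jap ξ ^ m * ‖FT (⇑(v ε)) ξ‖ ≤ ε ^ (-(1:ℝ)) * ε ^ (-(N₀:ℝ)) :=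
            mul_le_mul hjm hFT0 (norm_nonneg _) (by positivity)
        _ = ε ^ (-((N₀+1:ℕ):ℝ)) := by
            rw [← Real.rpow_add hε]; congr 1; push_cast; ring
  tfae_have 3 → 1 := by
    rintro ⟨N, h3⟩ ξf hmod hfast hmem k
    obtain ⟨a, ha, e₀, he₀, hfa⟩ := hfast
    obtain ⟨n, hn⟩ := exists_nat_ge (((N:ℝ)+k)/a)
    set m : ℕ := n+1 with hmdef
    have hm1 : 1 ≤ m := by omega
    have hma : (N:ℝ) + k ≤ a * m := by
      have h0 : ((N:ℝ)+k)/a ≤ (m:ℝ) := le_trans hn (by rw [hmdef]; push_cast; linarith)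
      calc (N:ℝ)+k = (((N:ℝ)+k)/a)*a := by field_simp
        _ ≤ (m:ℝ)*a := mul_le_mul_of_nonneg_right h0 ha.le
        _ = a*m := mul_comm _ _
    obtain ⟨e₁, he₁, h3'⟩ := h3 m hm1
    refine ⟨min (min e₀ e₁) 1, by positivity, fun ε hε hεle => ?_⟩
    have hε1 : ε ≤ 1 := hεle.trans (min_le_right _ _)
    have hεe₀ : ε ≤ e₀ := hεle.trans ((min_le_left _ _).trans (min_le_left _ _))
    have hεe₁ : ε ≤ e₁ := hεle.trans ((min_le_left _ _).trans (min_le_right _ _))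
    have hΓm := hmem ε hε hε1
    have hbig : jap (ξf ε) ^ m * ‖FT (⇑(v ε)) (ξf ε)‖ ≤ ε ^ (-(N:ℝ)) :=
      h3' ε hε hεe₁ (ξf ε) hΓm
    have hfa' : ε ^ (-a) ≤ ‖ξf ε‖ := hfa ε hε hεe₀
    have hjap : ε ^ (-(a*(m:ℝ))) ≤ jap (ξf ε) ^ m := by
      have h1 : ε ^ (-a) ≤ jap (ξf ε) := hfa'.trans (norm_le_jap _)
      calc ε ^ (-(a*(m:ℝ))) = (ε ^ (-a))^m := by
            rw [← Real.rpow_natCast (ε ^ (-a)) m, ← Real.rpow_mul hε.le]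
            congr 1; ring
        _ ≤ jap (ξf ε) ^ m := pow_le_pow_left₀ (by positivity) h1 m
    have h4 : (0:ℝ) < ε ^ (-(a*(m:ℝ))) := Real.rpow_pos_of_pos hε _
    have h2 : ε ^ (-(a*(m:ℝ))) * ‖FT (⇑(v ε)) (ξf ε)‖ ≤ ε ^ (-(N:ℝ)) :=
      le_trans (mul_le_mul_of_nonneg_right hjap (norm_nonneg _)) hbig
    have hFT : ‖FT (⇑(v ε)) (ξf ε)‖ ≤ ε ^ (-(N:ℝ) + a*(m:ℝ)) := by
      rw [show (-(N:ℝ) + a*(m:ℝ)) = (-(N:ℝ)) - (-(a*(m:ℝ))) by ring, Real.rpow_sub hε]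
      exact (le_div_iff₀' h4).mpr h2
    refine hFT.trans (Real.rpow_le_rpow_of_exponent_ge hε hε1 ?_)
    linarith
  tfae_finish
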